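/- arXiv:1304.2315 — 3 statements merged into one kernel-verified Lean document; each statement's English description precedes it below -/
import Mathlib

section
/- If ρ₁ and ρ₂ are the two roots of a x² + b x + c = 0 with 0 < ρ₁ < ρ₂, and m > −1, n > −1, then ∫₀^{ρ₁} x^m (a x² + b x + c)^n dx = c^n ρ₁^{m+1} Γ(m+1) Γ(n+1)/Γ(m+n+2) · ₂F₁(m+1, −n; m+n+2; ρ₁/ρ₂). -/
open Real MeasureTheory intervalIntegral

/-- Pochhammer symbol `(s)_k` for real `s`. -/
noncomputable def rpoch (s : ℝ) (k : ℕ) : ℝ := ∏ i ∈ Finset.range k, (s + i)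

/-- Gauss hypergeometric function `₂F₁` (real). -/
noncomputable def hyp2F1 (a b c z : ℝ) : ℝ :=
  ∑' n : ℕ, rpoch a n * rpoch b n / (rpoch c n * (n.factorial : ℝ)) * z ^ n

open Filter Topology Set

lemma rpoch_zero (s : ℝ) : rpoch s 0 = 1 := by simp [rpoch]

lemma rpoch_succ (s : ℝ) (k : ℕ) : rpoch s (k+1) = rpoch s k * (s + k) := by
  simp [rpoch, Finset.prod_range_succ]

/-- ratio test helper -/
lemma summable_ratio_aux {f : ℕ → ℝ} {r C : ℝ} (hr0 : 0 ≤ r) (hr : r < 1) (hC : 0 ≤ C)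
    (h : ∀ k : ℕ, |f (k+1)| ≤ (1 + C/(k+1)) * r * |f k|) : Summable f := by
  apply summable_of_ratio_norm_eventually_le (r := (1+r)/2) (by linarith)
  have ht : Tendsto (fun k : ℕ => (1 + C/(k+1)) * r) atTop (𝓝 ((1 + C * 0) * r)) := by
    apply Tendsto.mul_const
    apply Tendsto.const_add
    have := tendsto_one_div_add_atTop_nhds_zero_nat (𝕜 := ℝ)
    simpa [div_eq_mul_inv] using (this.const_mul C)
  have hlt : (1 + C * 0) * r < (1 + r)/2 := by simp; linarith
  filter_upwards [ht.eventually_le_const hlt] with k hk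
  simp only [Real.norm_eq_abs]
  calc |f (k+1)| ≤ (1 + C/(k+1)) * r * |f k| := h k
    _ ≤ (1+r)/2 * |f k| := by
        apply mul_le_mul_of_nonneg_right hk (abs_nonneg _)

lemma summable_poch_geom (s : ℝ) (j : ℕ) {r : ℝ} (hr0 : 0 ≤ r) (hr : r < 1) :
    Summable (fun k : ℕ => |rpoch s (k+j)| / (k.factorial : ℝ) * r ^ k) := by
  apply summable_ratio_aux hr0 hr (C := |s| + j) (by positivity)
  intro k
  have h1 : (0:ℝ) < (k.factorial : ℝ) := by exact_mod_cast k.factorial_pos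
  have h3 : (0:ℝ) < (k:ℝ)+1 := by positivity
  have hfact : ((k+1).factorial : ℝ) = ((k:ℝ)+1) * (k.factorial : ℝ) := by
    rw [Nat.factorial_succ]; push_cast; ring
  have key : |rpoch s (k+1+j)| = |rpoch s (k+j)| * |s + ((k:ℝ)+j)| := by
    have h5 : k+1+j = (k+j)+1 := by ring
    rw [h5, rpoch_succ, abs_mul]
    push_cast; ring_nf
  have habs : |s + ((k:ℝ)+j)| ≤ (1 + (|s|+j)/(k+1)) * ((k:ℝ)+1) := by
    rw [add_mul, div_mul_cancel₀ _ (ne_of_gt h3), one_mul]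
    calc |s + ((k:ℝ)+j)| ≤ |s| + ((k:ℝ)+j) := by
          have := abs_add_le s ((k:ℝ)+j)
          have h6 : |(k:ℝ)+j| = (k:ℝ)+j := abs_of_nonneg (by positivity)
          linarith
      _ ≤ (k:ℝ) + 1 + (|s| + j) := by linarith
  rw [abs_of_nonneg (a := |rpoch s (k+1+j)| / ((k+1).factorial:ℝ) * r^(k+1)) (by positivity),
     abs_of_nonneg (a := |rpoch s (k+j)| / (k.factorial:ℝ) * r^k) (by positivity), key, hfact]
  rw [pow_succ]
  rw [show |rpoch s (k + j)| * |s + ((k:ℝ) + j)| / (((k:ℝ) + 1) * (k.factorial:ℝ)) * (r ^ k * r)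
      = |rpoch s (k + j)| * |s + ((k:ℝ) + j)| / ((k:ℝ) + 1) / (k.factorial:ℝ) * (r ^ k * r) by
    rw [div_div]]
  have hb : |rpoch s (k+j)| * |s + ((k:ℝ)+j)| / ((k:ℝ)+1) ≤
      |rpoch s (k+j)| * (1 + (|s|+j)/(k+1)) := by
    rw [div_le_iff₀ h3, mul_assoc]
    exact mul_le_mul_of_nonneg_left habs (abs_nonneg _)
  calc |rpoch s (k+j)| * |s + ((k:ℝ)+j)| / ((k:ℝ)+1) / (k.factorial:ℝ) * (r^k * r)
      ≤ |rpoch s (k+j)| * (1 + (|s|+j)/(k+1)) / (k.factorial:ℝ) * (r^k * r) := by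
        apply mul_le_mul_of_nonneg_right _ (by positivity)
        exact div_le_div_of_nonneg_right hb h1.le
    _ = (1 + (|s|+j)/(k+1)) * r * (|rpoch s (k+j)| / (k.factorial:ℝ) * r^k) := by ring

lemma norm_term_eq (s y : ℝ) (k : ℕ) :
    ‖rpoch s k / (k.factorial : ℝ) * y ^ k‖ = |rpoch s k| / (k.factorial : ℝ) * |y| ^ k := by
  rw [Real.norm_eq_abs, abs_mul, abs_div, abs_pow, Nat.abs_cast]

lemma summable_A (s : ℝ) {y : ℝ} (hy : |y| < 1) :
    Summable (fun k : ℕ => rpoch s k / (k.factorial : ℝ) * y ^ k) := by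
  apply Summable.of_norm
  refine (summable_poch_geom s 0 (abs_nonneg y) hy).congr fun k => ?_
  rw [norm_term_eq, Nat.add_zero]

lemma summable_B (s : ℝ) {y : ℝ} (hy : |y| < 1) :
    Summable (fun k : ℕ => ((k:ℝ)+1) * (rpoch s (k+1) / ((k+1).factorial : ℝ)) * y ^ k) := by
  apply Summable.of_norm
  refine (summable_poch_geom s 1 (abs_nonneg y) hy).congr fun k => ?_
  have hfact : ((k+1).factorial : ℝ) = ((k:ℝ)+1) * (k.factorial : ℝ) := by
    rw [Nat.factorial_succ]; push_cast; ring
  rw [Real.norm_eq_abs, abs_mul, abs_mul, abs_pow, abs_div, Nat.abs_cast, hfact,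
    abs_of_nonneg (show (0:ℝ) ≤ (k:ℝ)+1 by positivity)]
  have h3 : ((k:ℝ)+1) ≠ 0 := by positivity
  field_simp

lemma hasSum_binomial (p : ℝ) {w : ℝ} (h0 : 0 ≤ w) (h1 : w < 1) :
    HasSum (fun k : ℕ => rpoch (-p) k / (k.factorial : ℝ) * w ^ k) ((1 - w) ^ p) := by
  set a : ℕ → ℝ := fun k => rpoch (-p) k / (k.factorial : ℝ) with ha
  set S : ℝ → ℝ := fun y => ∑' k, a k * y ^ k with hS
  set T : ℝ → ℝ := fun y => ∑' k : ℕ, ((k:ℝ)+1) * a (k+1) * y ^ k with hT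
  set r : ℝ := (1 + w)/2 with hrdef
  have hwr : w < r := by rw [hrdef]; linarith
  have hr1 : r < 1 := by rw [hrdef]; linarith
  have hr0 : 0 < r := by rw [hrdef]; linarith
  set t : Set ℝ := Set.Ioo (-r) r with htdef
  -- the recurrence
  have hrec : ∀ k : ℕ, ((k:ℝ)+1) * a (k+1) = ((k:ℝ) - p) * a k := by
    intro k
    have hfact : ((k+1).factorial : ℝ) = ((k:ℝ)+1) * (k.factorial : ℝ) := by
      rw [Nat.factorial_succ]; push_cast; ring
    have h1' : (k.factorial : ℝ) ≠ 0 := by positivity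
    have h3 : ((k:ℝ)+1) ≠ 0 := by positivity
    simp only [ha, rpoch_succ, hfact]
    field_simp
    ring
  -- summable bound for derivative
  set u : ℕ → ℝ := fun k => (k:ℝ) * |a k| * r^(k-1) with hu_def
  have hu : Summable u := by
    rw [← summable_nat_add_iff 1]
    refine (summable_poch_geom (-p) 1 hr0.le hr1).congr fun k => ?_
    have hfact : ((k+1).factorial : ℝ) = ((k:ℝ)+1) * (k.factorial : ℝ) := by
      rw [Nat.factorial_succ]; push_cast; ring
    have h3 : ((k:ℝ)+1) ≠ 0 := by positivity
    simp only [hu_def, ha, Nat.add_sub_cancel, abs_div, Nat.abs_cast, hfact]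
    push_cast
    field_simp
  -- derivative of S
  have hg : ∀ (k : ℕ) (y : ℝ), y ∈ t → HasDerivAt (fun z => a k * z ^ k)
      (a k * ((k:ℝ) * y ^ (k-1))) y := fun k y _ => (hasDerivAt_pow k y).const_mul (a k)
  have hg' : ∀ (k : ℕ) (y : ℝ), y ∈ t → ‖a k * ((k:ℝ) * y ^ (k-1))‖ ≤ u k := by
    intro k y hy
    have hyr : |y| ≤ r := by
      rw [abs_le]; exact ⟨hy.1.le, hy.2.le⟩
    rw [Real.norm_eq_abs, abs_mul, abs_mul, Nat.abs_cast, abs_pow]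
    calc |a k| * ((k:ℝ) * |y|^(k-1)) ≤ |a k| * ((k:ℝ) * r^(k-1)) := by
          apply mul_le_mul_of_nonneg_left _ (abs_nonneg _)
          exact mul_le_mul_of_nonneg_left (pow_le_pow_left₀ (abs_nonneg y) hyr _) (by positivity)
      _ = u k := by rw [hu_def]; ring
  have hg0 : Summable fun k => a k * (0:ℝ) ^ k := by
    apply summable_of_ne_finset_zero (s := {0})
    intro k hk
    simp only [Finset.mem_singleton] at hk
    rw [zero_pow hk, mul_zero]
  have h0t : (0:ℝ) ∈ t := by constructor <;> simp [hr0] <;> linarith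
  have hSder : ∀ y ∈ t, HasDerivAt S (T y) y := by
    intro y hy
    have hD := hasDerivAt_tsum_of_isPreconnected hu isOpen_Ioo (convex_Ioo _ _).isPreconnected
      hg hg' h0t hg0 hy
    have hSg' : Summable (fun k => a k * ((k:ℝ) * y ^ (k-1))) :=
      Summable.of_norm (hu.of_nonneg_of_le (fun k => norm_nonneg _) (fun k => hg' k y hy))
    have heq : (∑' k, a k * ((k:ℝ) * y ^ (k-1))) = T y := by
      rw [Summable.tsum_eq_zero_add hSg']
      simp only [Nat.cast_zero, zero_mul, mul_zero, zero_add, hT]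
      congr 1
      funext k
      simp only [Nat.add_sub_cancel]
      push_cast
      ring
    rw [heq] at hD
    exact hD
  -- the ODE identity
  have hode : ∀ y ∈ t, (1 - y) * T y = -p * S y := by
    intro y hy
    have hy1 : |y| < 1 := lt_of_lt_of_le (abs_lt.mpr ⟨hy.1, hy.2⟩) hr1.le
    have SA : Summable (fun k => a k * y ^ k) := by
      refine (summable_A (-p) hy1).congr fun k => rfl
    have ST : Summable (fun k : ℕ => ((k:ℝ)+1) * a (k+1) * y ^ k) := by
      refine (summable_B (-p) hy1).congr fun k => rfl
    have SW : Summable (fun k : ℕ => (k:ℝ) * a k * y ^ k) := by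
      rw [← summable_nat_add_iff 1]
      refine ((ST.mul_left y).congr fun k => ?_)
      push_cast
      ring
    have hshift : ∑' k : ℕ, (k:ℝ) * a k * y ^ k = y * T y := by
      rw [Summable.tsum_eq_zero_add SW]
      simp only [Nat.cast_zero, zero_mul, zero_add, hT]
      rw [← tsum_mul_left]
      congr 1
      funext k
      push_cast
      ring
    have hTval : T y = (∑' k : ℕ, (k:ℝ) * a k * y ^ k) - p * S y := by
      have step1 : T y = ∑' k : ℕ, ((k:ℝ) * a k * y ^ k - p * (a k * y ^ k)) :=
        tsum_congr fun k => by
          rw [show ((k:ℝ)+1) * a (k+1) * y ^ k = (((k:ℝ)+1) * a (k+1)) * y ^ k from rfl, hrec k]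
          ring
      rw [step1, Summable.tsum_sub SW (SA.mul_left p), tsum_mul_left]
    have hTy : T y = y * T y - p * S y := hTval.trans (by rw [hshift])
    linear_combination hTy
  -- g is constant on [0, w]
  set g : ℝ → ℝ := fun y => (1 - y)^(-p) * S y with hgdef
  have hIcc_sub : Icc (0:ℝ) w ⊆ t := by
    intro y hy
    exact ⟨by linarith [hy.1, hr0], by linarith [hy.2, hwr]⟩
  have hgder : ∀ y ∈ Icc (0:ℝ) w, HasDerivAt g 0 y := by
    intro y hy
    have hyt : y ∈ t := hIcc_sub hy
    have h1y : (0:ℝ) < 1 - y := by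
      have := hy.2; linarith
    have hpow : HasDerivAt (fun x : ℝ => (1-x)^(-p)) (p * (1-y)^(-p-1)) y := by
      have h := Real.hasDerivAt_rpow_const (x := 1-y) (p := -p) (Or.inl h1y.ne')
      have h2 : HasDerivAt (fun x : ℝ => 1 - x) (-1) y := (hasDerivAt_id y).const_sub 1
      have h3 := h.comp y h2
      refine h3.congr_deriv ?_
      ring
    have h4 := hpow.mul (hSder y hyt)
    have h5 : p * (1-y)^(-p-1) * S y + (1-y)^(-p) * T y = 0 := by
      have hp1 : (1-y)^(-p) = (1-y)^(-p-1) * (1-y) := by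
        rw [← Real.rpow_add_one h1y.ne']
        norm_num
      rw [hp1]
      have := hode y hyt
      linear_combination (1-y)^(-p-1) * this
    rw [h5] at h4
    exact h4
  have hcont : ContinuousOn g (Icc 0 w) := fun y hy =>
    (hgder y hy).continuousAt.continuousWithinAt
  have hconst := constant_of_has_deriv_right_zero hcont
    (fun y hy => (hgder y (Ico_subset_Icc_self hy)).hasDerivWithinAt) w (right_mem_Icc.mpr h0)
  -- evaluate
  have hS0 : S 0 = 1 := by
    have : S 0 = ∑' k : ℕ, a k * (0:ℝ) ^ k := rfl
    rw [this, tsum_eq_single 0 (fun k hk => by rw [zero_pow hk, mul_zero])]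
    simp [ha, rpoch_zero]
  have hg0' : g 0 = 1 := by
    rw [hgdef]
    simp [hS0]
  rw [hg0'] at hconst
  -- conclude S w = (1-w)^p
  have h1w : (0:ℝ) < 1 - w := by linarith
  have hSw : S w = (1 - w) ^ p := by
    have h6 : (1 - w)^(-p) * S w = 1 := hconst
    have h7 : (1-w)^(-p) = ((1-w)^p)⁻¹ := Real.rpow_neg h1w.le p
    rw [h7] at h6
    have h8 : (1-w)^p ≠ 0 := by
      have := Real.rpow_pos_of_pos h1w p
      exact this.ne'
    field_simp at h6
    linarith [h6]
  have hw1 : |w| < 1 := by rw [abs_of_nonneg h0]; exact h1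
  have := (summable_A (-p) hw1).hasSum
  rwa [show (∑' k : ℕ, rpoch (-p) k / (k.factorial:ℝ) * w ^ k) = (1-w)^p from hSw] at this

lemma beta_integrableOn {u v : ℝ} (hu : 0 < u) (hv : 0 < v) :
    IntegrableOn (fun t : ℝ => t^(u-1) * (1-t)^(v-1)) (Set.Ioc 0 1) := by
  have hc := Complex.betaIntegral_convergent (u := (u:ℂ)) (v := (v:ℂ)) (by simpa) (by simpa)
  have h1 : IntegrableOn (fun x : ℝ => (x:ℂ)^((u:ℂ)-1) * ((1:ℂ)-x)^((v:ℂ)-1))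
      (Set.Ioc 0 1) := hc.1
  have h2 := h1.re
  refine MeasureTheory.IntegrableOn.congr_fun h2 ?_ measurableSet_Ioc
  intro x hx
  have hx0 : (0:ℝ) ≤ x := hx.1.le
  have hx1 : (0:ℝ) ≤ 1 - x := by linarith [hx.2]
  have e1 : ((x:ℝ) : ℂ)^((u:ℂ)-1) = ((x^(u-1) : ℝ) : ℂ) := by
    rw [Complex.ofReal_cpow hx0]
    push_cast
    rfl
  have e2 : ((1:ℂ) - (x:ℝ))^((v:ℂ)-1) = (((1-x)^(v-1) : ℝ) : ℂ) := by
    rw [show ((1:ℂ) - (x:ℝ)) = (((1-x : ℝ)) : ℂ) by push_cast; ring,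
      Complex.ofReal_cpow hx1]
    push_cast
    rfl
  simp only [RCLike.re_to_complex, e1, e2, ← Complex.ofReal_mul, Complex.ofReal_re]

lemma beta_integral_real {u v : ℝ} (hu : 0 < u) (hv : 0 < v) :
    ∫ t in Set.Ioc (0:ℝ) 1, t^(u-1) * (1-t)^(v-1) =
      Real.Gamma u * Real.Gamma v / Real.Gamma (u+v) := by
  have key : Complex.betaIntegral u v
      = ((∫ t in Set.Ioc (0:ℝ) 1, t^(u-1)*(1-t)^(v-1) : ℝ) : ℂ) := by
    rw [Complex.betaIntegral]
    have hcongr : (∫ x in (0:ℝ)..1, (x:ℂ)^((u:ℂ)-1) * ((1:ℂ)-x)^((v:ℂ)-1))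
        = ∫ x in (0:ℝ)..1, ((x^(u-1)*(1-x)^(v-1) : ℝ) : ℂ) := by
      apply intervalIntegral.integral_congr
      intro x hx
      rw [Set.uIcc_of_le zero_le_one] at hx
      have hx0 : (0:ℝ) ≤ x := hx.1
      have hx1 : (0:ℝ) ≤ 1 - x := by linarith [hx.2]
      have e1 : ((x:ℝ) : ℂ)^((u:ℂ)-1) = ((x^(u-1) : ℝ) : ℂ) := by
        rw [Complex.ofReal_cpow hx0]; push_cast; rfl
      have e2 : ((1:ℂ) - (x:ℝ))^((v:ℂ)-1) = (((1-x)^(v-1) : ℝ) : ℂ) := by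
        rw [show ((1:ℂ) - (x:ℝ)) = (((1-x : ℝ)) : ℂ) by push_cast; ring,
          Complex.ofReal_cpow hx1]
        push_cast; rfl
      simp only [e1, e2, ← Complex.ofReal_mul]
    rw [hcongr, intervalIntegral.integral_ofReal,
      intervalIntegral.integral_of_le zero_le_one]
  have hG := Complex.Gamma_mul_Gamma_eq_betaIntegral
    (s := (u:ℂ)) (t := (v:ℂ)) (by simpa) (by simpa)
  rw [key] at hG
  have hcast : ((Real.Gamma u * Real.Gamma v : ℝ) : ℂ)
      = ((Real.Gamma (u+v) * ∫ t in Set.Ioc (0:ℝ) 1, t^(u-1)*(1-t)^(v-1) : ℝ) : ℂ) := by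
    calc ((Real.Gamma u * Real.Gamma v : ℝ) : ℂ)
        = Complex.Gamma (u:ℂ) * Complex.Gamma (v:ℂ) := by
          rw [Complex.Gamma_ofReal, Complex.Gamma_ofReal]; push_cast; ring
      _ = Complex.Gamma ((u:ℂ)+(v:ℂ)) * ((∫ t in Set.Ioc (0:ℝ) 1, t^(u-1)*(1-t)^(v-1) : ℝ) : ℂ) := hG
      _ = ((Real.Gamma (u+v) * ∫ t in Set.Ioc (0:ℝ) 1, t^(u-1)*(1-t)^(v-1) : ℝ) : ℂ) := by
          rw [show ((u:ℂ)+(v:ℂ)) = (((u+v:ℝ)):ℂ) by push_cast; rfl, Complex.Gamma_ofReal]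
          push_cast; ring
  have hre := Complex.ofReal_injective hcast
  have hGpos : 0 < Real.Gamma (u+v) := Real.Gamma_pos_of_pos (by linarith)
  field_simp
  linarith [hre]

lemma mul_rpow_gen (c : ℝ) {u : ℝ} (hu : 0 ≤ u) (e : ℝ) : (c*u)^e = c^e * u^e := by
  rcases lt_trichotomy c 0 with hc|hc|hc
  · rcases eq_or_lt_of_le hu with h0|h0
    · rw [← h0, mul_zero]
      by_cases he : e = 0
      · simp [he]
      · rw [Real.zero_rpow he, mul_zero]
    · rw [Real.rpow_def_of_neg (mul_neg_of_neg_of_pos hc h0), Real.rpow_def_of_neg hc,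
        Real.log_mul hc.ne h0.ne', Real.rpow_def_of_pos h0, add_mul, Real.exp_add]
      ring
  · subst hc
    by_cases he : e = 0
    · simp [he]
    · rw [zero_mul]; simp [Real.zero_rpow he]
  · exact Real.mul_rpow hc.le hu

lemma Gamma_poch {s : ℝ} (hs : 0 < s) (k : ℕ) :
    Real.Gamma (s + k) = Real.Gamma s * rpoch s k := by
  induction k with
  | zero => simp [rpoch_zero]
  | succ k ih =>
    have hsk : (0:ℝ) < s + k := by positivity
    have : s + ((k:ℕ)+1:ℕ) = (s + k) + 1 := by push_cast; ring
    rw [this, Real.Gamma_add_one hsk.ne', ih, rpoch_succ]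
    ring

lemma rpoch_pos {s : ℝ} (hs : 0 < s) (k : ℕ) : 0 < rpoch s k := by
  unfold rpoch
  apply Finset.prod_pos
  intro i _
  positivity

theorem stmt1 (a b c ρ₁ ρ₂ m n : ℝ)
    (hρ : 0 < ρ₁) (hρ' : ρ₁ < ρ₂)
    (hroot₁ : a * ρ₁ ^ 2 + b * ρ₁ + c = 0) (hroot₂ : a * ρ₂ ^ 2 + b * ρ₂ + c = 0)
    (ha : a ≠ 0) (hm : -1 < m) (hn : -1 < n) :
    (∫ x in (0:ℝ)..ρ₁, x ^ m * (a * x ^ 2 + b * x + c) ^ n) =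
      c ^ n * ρ₁ ^ (m + 1) * Real.Gamma (m + 1) * Real.Gamma (n + 1) /
        Real.Gamma (m + n + 2) * hyp2F1 (m + 1) (-n) (m + n + 2) (ρ₁ / ρ₂) := by
  have hρ₂ : 0 < ρ₂ := hρ.trans hρ'
  set z : ℝ := ρ₁/ρ₂ with hzdef
  have hz0 : 0 < z := div_pos hρ hρ₂
  have hz1 : z < 1 := (div_lt_one hρ₂).mpr hρ'
  have hm1 : (0:ℝ) < m + 1 := by linarith
  have hn1 : (0:ℝ) < n + 1 := by linarith
  -- Vieta
  have hfac : (ρ₁ - ρ₂) * (a*(ρ₁+ρ₂) + b) = 0 := by linear_combination hroot₁ - hroot₂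
  have hb : b = -(a*(ρ₁+ρ₂)) := by
    rcases mul_eq_zero.mp hfac with h|h
    · exfalso; have : ρ₁ ≠ ρ₂ := ne_of_lt hρ'; exact this (by linarith)
    · linarith
  have hc : c = a*ρ₁*ρ₂ := by
    rw [hb] at hroot₁
    linear_combination hroot₁
  have hquad : ∀ t : ℝ, a*(ρ₁*t)^2 + b*(ρ₁*t) + c = c * ((1-t)*(1-z*t)) := by
    intro t
    rw [hb, hc, hzdef]
    field_simp
    ring
  -- step 1: substitution x = ρ₁ t
  have hsub : (∫ x in (0:ℝ)..ρ₁, x^m * (a*x^2+b*x+c)^n)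
      = ρ₁ * ∫ t in (0:ℝ)..1, (ρ₁*t)^m * (a*(ρ₁*t)^2+b*(ρ₁*t)+c)^n := by
    rw [intervalIntegral.integral_comp_mul_left
      (f := fun x => x^m*(a*x^2+b*x+c)^n) (ne_of_gt hρ)]
    rw [mul_zero, mul_one, smul_eq_mul, ← mul_assoc, mul_inv_cancel₀ (ne_of_gt hρ), one_mul]
  -- step 2: pointwise transformation
  have hpt : ∀ t ∈ Set.uIcc (0:ℝ) 1, (ρ₁*t)^m * (a*(ρ₁*t)^2+b*(ρ₁*t)+c)^n
      = (ρ₁^m * c^n) * (t^m * ((1-t)^n * (1-z*t)^n)) := by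
    intro t ht
    rw [Set.uIcc_of_le zero_le_one] at ht
    have ht0 : 0 ≤ t := ht.1
    have ht1 : 0 ≤ 1 - t := by linarith [ht.2]
    have hzt : 0 ≤ 1 - z*t := by nlinarith [ht.2]
    rw [hquad t, Real.mul_rpow hρ.le ht0,
      mul_rpow_gen c (by nlinarith : (0:ℝ) ≤ (1-t)*(1-z*t)) n, Real.mul_rpow ht1 hzt]
    ring
  set J := ∫ t in Set.Ioc (0:ℝ) 1, t^m * ((1-t)^n * (1-z*t)^n) with hJdef
  have hIJ : (∫ t in (0:ℝ)..1, (ρ₁*t)^m * (a*(ρ₁*t)^2+b*(ρ₁*t)+c)^n) = (ρ₁^m*c^n) * J := by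
    rw [intervalIntegral.integral_congr hpt, intervalIntegral.integral_const_mul,
      intervalIntegral.integral_of_le zero_le_one]
  -- series setup
  set A : ℕ → ℝ := fun k => rpoch (-n) k / (k.factorial : ℝ) * z^k with hAdef
  set F : ℕ → ℝ → ℝ := fun k t => A k * (t^(m+(k:ℝ)) * (1-t)^n) with hFdef
  have hint : ∀ k : ℕ, IntegrableOn (fun t => t^(m+(k:ℝ)) * (1-t)^n) (Set.Ioc (0:ℝ) 1) := by
    intro k
    have h := beta_integrableOn (u := m+(k:ℝ)+1) (v := n+1) (by have := Nat.cast_nonneg (α := ℝ) k; linarith) hn1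
    simp only [show m+(k:ℝ)+1-1 = m+(k:ℝ) by ring, show n+(1:ℝ)-1 = n by ring] at h
    exact h
  have hval : ∀ k : ℕ, (∫ t in Set.Ioc (0:ℝ) 1, t^(m+(k:ℝ)) * (1-t)^n)
      = Real.Gamma (m+(k:ℝ)+1) * Real.Gamma (n+1) / Real.Gamma (m+(k:ℝ)+n+2) := by
    intro k
    have h := beta_integral_real (u := m+(k:ℝ)+1) (v := n+1) (by have := Nat.cast_nonneg (α := ℝ) k; linarith) hn1
    simp only [show m+(k:ℝ)+1-1 = m+(k:ℝ) by ring, show n+(1:ℝ)-1 = n by ring,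
      show m+(k:ℝ)+1+(n+1) = m+(k:ℝ)+n+2 by ring] at h
    exact h
  -- pointwise hasSum
  have hptsum : ∀ t ∈ Set.Ioc (0:ℝ) 1, HasSum (fun k => F k t)
      (t^m * ((1-t)^n * (1-z*t)^n)) := by
    intro t ht
    have ht0 : 0 < t := ht.1
    have hzt0 : 0 ≤ z*t := by positivity
    have hzt1 : z*t < 1 := by nlinarith [ht.2]
    have hbin := (hasSum_binomial n hzt0 hzt1).mul_left (t^m * (1-t)^n)
    have hfe : (fun k : ℕ => (t^m * (1-t)^n) * (rpoch (-n) k / (k.factorial:ℝ) * (z*t)^k))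
        = fun k => F k t := by
      funext k
      rw [hFdef, hAdef]
      simp only []
      rw [mul_pow, Real.rpow_add ht0, Real.rpow_natCast]
      ring
    rw [hfe] at hbin
    rw [← mul_assoc]
    exact hbin
  -- integrability of each F k
  have hFint : ∀ k : ℕ, Integrable (F k) (volume.restrict (Set.Ioc (0:ℝ) 1)) := by
    intro k
    exact ((hint k).const_mul (A k))
  -- summability of integrals of norms
  have hB0 : IntegrableOn (fun t => t^m * (1-t)^n) (Set.Ioc (0:ℝ) 1) := by
    have h := hint 0
    simpa using h
  set B0 : ℝ := ∫ t in Set.Ioc (0:ℝ) 1, t^m * (1-t)^n with hB0def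
  have hnormval : ∀ k : ℕ, (∫ t in Set.Ioc (0:ℝ) 1, ‖F k t‖)
      = |A k| * ∫ t in Set.Ioc (0:ℝ) 1, t^(m+(k:ℝ)) * (1-t)^n := by
    intro k
    rw [← MeasureTheory.integral_const_mul]
    apply setIntegral_congr_fun measurableSet_Ioc
    intro t ht
    have ht1 : (0:ℝ) ≤ 1 - t := by linarith [ht.2]
    rw [hFdef]
    simp only []
    rw [Real.norm_eq_abs, abs_mul, abs_of_nonneg
      (mul_nonneg (Real.rpow_nonneg ht.1.le _) (Real.rpow_nonneg ht1 _))]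
  have hFsum : Summable fun k : ℕ => ∫ t in Set.Ioc (0:ℝ) 1, ‖F k t‖ := by
    have hsumm : Summable (fun k : ℕ => (|rpoch (-n) k| / (k.factorial:ℝ) * z^k) * B0) :=
      (summable_poch_geom (-n) 0 hz0.le hz1).mul_right B0
    apply Summable.of_nonneg_of_le
      (fun k => integral_nonneg fun t => norm_nonneg _) _ hsumm
    intro k
    rw [hnormval k]
    have hAk : |A k| = |rpoch (-n) k| / (k.factorial:ℝ) * z^k := by
      rw [hAdef]
      simp only []
      rw [abs_mul, abs_div, Nat.abs_cast, abs_pow, abs_of_nonneg hz0.le]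
    rw [hAk]
    apply mul_le_mul_of_nonneg_left _ (by positivity)
    rw [hB0def]
    apply setIntegral_mono_on (hint k) hB0 measurableSet_Ioc
    intro t ht
    have ht1 : (0:ℝ) ≤ 1 - t := by linarith [ht.2]
    apply mul_le_mul_of_nonneg_right _ (by positivity)
    exact Real.rpow_le_rpow_of_exponent_ge ht.1 ht.2 (by linarith [Nat.cast_nonneg (α := ℝ) k])
  -- interchange
  have hswap := MeasureTheory.integral_tsum_of_summable_integral_norm hFint hFsum
  have hJeq : J = ∑' k : ℕ, ∫ t in Set.Ioc (0:ℝ) 1, F k t := by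
    rw [hswap, hJdef]
    apply setIntegral_congr_fun measurableSet_Ioc
    intro t ht
    exact ((hptsum t ht).tsum_eq).symm
  -- evaluate each integral
  have hterm : ∀ k : ℕ, (∫ t in Set.Ioc (0:ℝ) 1, F k t)
      = A k * (Real.Gamma (m+(k:ℝ)+1) * Real.Gamma (n+1) / Real.Gamma (m+(k:ℝ)+n+2)) := by
    intro k
    rw [hFdef]
    simp only []
    rw [MeasureTheory.integral_const_mul, hval k]
  -- Gamma to pochhammer
  have hmn2 : (0:ℝ) < m + n + 2 := by linarith
  have hG1 : ∀ k : ℕ, Real.Gamma (m+(k:ℝ)+1) = Real.Gamma (m+1) * rpoch (m+1) k := by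
    intro k
    rw [show m+(k:ℝ)+1 = (m+1)+(k:ℝ) by ring]
    exact Gamma_poch hm1 k
  have hG2 : ∀ k : ℕ, Real.Gamma (m+(k:ℝ)+n+2) = Real.Gamma (m+n+2) * rpoch (m+n+2) k := by
    intro k
    rw [show m+(k:ℝ)+n+2 = (m+n+2)+(k:ℝ) by ring]
    exact Gamma_poch hmn2 k
  have hGmn : 0 < Real.Gamma (m+n+2) := Real.Gamma_pos_of_pos hmn2
  set C : ℝ := Real.Gamma (m+1) * Real.Gamma (n+1) / Real.Gamma (m+n+2) with hCdef
  have htermC : ∀ k : ℕ, A k * (Real.Gamma (m+(k:ℝ)+1) * Real.Gamma (n+1) / Real.Gamma (m+(k:ℝ)+n+2))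
      = C * (rpoch (m+1) k * rpoch (-n) k / (rpoch (m+n+2) k * (k.factorial:ℝ)) * z^k) := by
    intro k
    rw [hG1 k, hG2 k, hAdef, hCdef]
    simp only []
    have h1 : rpoch (m+n+2) k ≠ 0 := (rpoch_pos hmn2 k).ne'
    have h2 : (k.factorial : ℝ) ≠ 0 := by positivity
    field_simp
  have hJval : J = C * hyp2F1 (m+1) (-n) (m+n+2) z := by
    rw [hJeq, hyp2F1, ← tsum_mul_left]
    apply tsum_congr
    intro k
    rw [hterm k, htermC k]
  -- final assembly
  rw [hsub, hIJ, hJval]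
  have hpow : ρ₁^(m+1) = ρ₁^m * ρ₁ := Real.rpow_add_one (ne_of_gt hρ) m
  rw [hCdef, hpow]
  field_simp
end

section
/- log(1 + 2/√3) = Σ_{n=0}^{∞} [Σ_{λ=0}^{n} (C(n,λ) (1/2)_λ/((1/2 − n)_λ)) ((1 − i√3)/2)^λ] · (1/2)_n/((n+1)!) · (2i/(√3 − i))^n, and in particular this doubly-indexed series converges to a real number. -/
open Complex Finset

/-- Pochhammer symbol `(s)_k` for complex `s`. -/
noncomputable def cpoch (s : ℂ) (k : ℕ) : ℂ := ∏ i ∈ Finset.range k, (s + i)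

/-- The general term of the double series for `log (1 + 2/√3)`. -/
noncomputable def stmt4Term (n : ℕ) : ℂ :=
  (∑ l ∈ Finset.range (n + 1),
      (n.choose l : ℂ) * cpoch (1 / 2) l / cpoch (1 / 2 - (n : ℂ)) l *
        ((1 - Complex.I * Real.sqrt 3) / 2) ^ l) *
    cpoch (1 / 2) n / ((n + 1).factorial : ℂ) *
    (2 * Complex.I / ((Real.sqrt 3 : ℂ) - Complex.I)) ^ n

namespace Stmt4Aux

/-! ### The real sequence `A l = (1/2)_l / l!` -/

noncomputable def A : ℕ → ℝ := fun l => ∏ i ∈ Finset.range l, (2 * i + 1) / (2 * i + 2)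

lemma A_zero : A 0 = 1 := by simp [A]

lemma A_succ (l : ℕ) : A (l + 1) = A l * ((2 * l + 1) / (2 * l + 2)) := by
  unfold A
  exact Finset.prod_range_succ _ l

lemma A_pos (l : ℕ) : 0 < A l := by
  apply Finset.prod_pos
  intro i _
  positivity

lemma A_le_one (l : ℕ) : A l ≤ 1 := by
  apply Finset.prod_le_one
  · intro i _; positivity
  · intro i _
    rw [div_le_one (by positivity)]
    norm_num

lemma A_sq_le (l : ℕ) : A l ^ 2 * (l + 1) ≤ 1 := by
  induction l with
  | zero => simp [A_zero]
  | succ n ih =>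
    rw [A_succ]
    have hA := A_pos n
    have h2 : (0:ℝ) < 2 * (n:ℝ) + 2 := by positivity
    push_cast
    push_cast at ih
    have key : ((2*(n:ℝ)+1)/(2*n+2))^2 * ((n:ℝ)+1+1) ≤ ((n:ℝ)+1) := by
      rw [div_pow, div_mul_eq_mul_div, div_le_iff₀ (by positivity)]
      nlinarith [sq_nonneg ((n:ℝ))]
    calc (A n * ((2*(n:ℝ)+1)/(2*n+2)))^2 * ((n:ℝ)+1+1)
        = A n ^2 * (((2*(n:ℝ)+1)/(2*n+2))^2 * ((n:ℝ)+1+1)) := by ring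
      _ ≤ A n ^2 * ((n:ℝ)+1) := by
          apply mul_le_mul_of_nonneg_left key (by positivity)
      _ ≤ 1 := ih

lemma A_le_inv_sqrt (l : ℕ) : A l ≤ (Real.sqrt ((l:ℝ) + 1))⁻¹ := by
  have h1 : A l ^ 2 ≤ (((l:ℝ)+1))⁻¹ := by
    have := A_sq_le l
    rw [← le_div_iff₀ (by positivity)] at this
    simpa [one_div] using this
  have h2 : A l ≤ Real.sqrt (((l:ℝ)+1)⁻¹) := by
    rw [show A l = Real.sqrt (A l ^ 2) from (Real.sqrt_sq (A_pos l).le).symm]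
    exact Real.sqrt_le_sqrt h1
  rwa [Real.sqrt_inv] at h2

/-! ### The Vandermonde-type identity `∑ A j * A (k - j) = 1` -/

lemma reflect_trick (g : ℕ → ℝ) (N : ℕ) (hsymm : ∀ j, j ≤ N → g (N - j) = g j) :
    2 * ∑ j ∈ Finset.range (N + 1), (j : ℝ) * g j
      = N * ∑ j ∈ Finset.range (N + 1), g j := by
  have h := Finset.sum_range_reflect (fun j => (j : ℝ) * g j) (N + 1)
  simp only [Nat.add_sub_cancel] at h
  have h2 : ∑ j ∈ Finset.range (N + 1), ((N - j : ℕ) : ℝ) * g j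
      = ∑ j ∈ Finset.range (N + 1), (j : ℝ) * g j := by
    rw [← h]
    apply Finset.sum_congr rfl
    intro j hj
    have hj' := Finset.mem_range.mp hj
    rw [hsymm j (by omega)]
  have h3 : ∀ j ∈ Finset.range (N + 1), ((N - j : ℕ) : ℝ) * g j + (j : ℝ) * g j
      = (N : ℝ) * g j := by
    intro j hj
    have hj' : j ≤ N := by simpa [Nat.lt_succ_iff] using hj
    rw [Nat.cast_sub hj']
    ring
  calc 2 * ∑ j ∈ Finset.range (N + 1), (j : ℝ) * g j
      = ∑ j ∈ Finset.range (N + 1), ((N - j : ℕ) : ℝ) * g j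
        + ∑ j ∈ Finset.range (N + 1), (j : ℝ) * g j := by rw [h2]; ring
    _ = ∑ j ∈ Finset.range (N + 1), (((N - j : ℕ) : ℝ) * g j + (j : ℝ) * g j) := by
        rw [← Finset.sum_add_distrib]
    _ = ∑ j ∈ Finset.range (N + 1), (N : ℝ) * g j := Finset.sum_congr rfl h3
    _ = N * ∑ j ∈ Finset.range (N + 1), g j := by rw [Finset.mul_sum]

lemma V : ∀ k : ℕ, ∑ j ∈ Finset.range (k + 1), A j * A (k - j) = 1 := by
  intro k
  induction k with
  | zero => simp [A_zero]
  | succ k ih =>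
    have hsymm1 : ∀ j, j ≤ k + 1 → A (k + 1 - j) * A (k + 1 - (k + 1 - j)) = A j * A (k + 1 - j) := by
      intro j hj
      rw [Nat.sub_sub_self hj]
      ring
    have hN := reflect_trick (fun j => A j * A (k + 1 - j)) (k + 1) hsymm1
    have hsymm2 : ∀ j, j ≤ k → A (k - j) * A (k - (k - j)) = A j * A (k - j) := by
      intro j hj
      rw [Nat.sub_sub_self hj]
      ring
    have hK := reflect_trick (fun j => A j * A (k - j)) k hsymm2
    rw [ih] at hK
    -- shift the sum in hN
    have hshift : ∑ j ∈ Finset.range (k + 2), (j : ℝ) * (A j * A (k + 1 - j))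
        = ∑ i ∈ Finset.range (k + 1), ((i : ℝ) + 1) * (A (i + 1) * A (k - i)) := by
      rw [Finset.sum_range_succ']
      simp only [Nat.cast_zero, zero_mul, add_zero]
      apply Finset.sum_congr rfl
      intro i hi
      have : k + 1 - (i + 1) = k - i := by omega
      rw [this]
      push_cast
      ring
    have hstep : ∀ i : ℕ, ((i : ℝ) + 1) * (A (i + 1) * A (k - i))
        = ((i : ℝ) + 1 / 2) * (A i * A (k - i)) := by
      intro i
      rw [A_succ]
      have h2 : (2 * (i:ℝ) + 2) ≠ 0 := by positivity
      field_simp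
    have hsum2 : ∑ i ∈ Finset.range (k + 1), ((i : ℝ) + 1) * (A (i + 1) * A (k - i))
        = (∑ i ∈ Finset.range (k + 1), (i : ℝ) * (A i * A (k - i))) + 1 / 2 := by
      calc ∑ i ∈ Finset.range (k + 1), ((i : ℝ) + 1) * (A (i + 1) * A (k - i))
          = ∑ i ∈ Finset.range (k + 1), (((i : ℝ)) * (A i * A (k - i)) + (1/2) * (A i * A (k-i))) := by
            apply Finset.sum_congr rfl
            intro i _
            rw [hstep i]
            ring
        _ = (∑ i ∈ Finset.range (k + 1), (i : ℝ) * (A i * A (k - i)))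
            + (1/2) * ∑ i ∈ Finset.range (k + 1), A i * A (k - i) := by
            rw [Finset.sum_add_distrib, Finset.mul_sum]
        _ = _ := by rw [ih]; ring
    rw [hshift, hsum2] at hN
    -- hN : 2 * (T + 1/2) = (k+1) * S, hK : 2 * T = k
    have hk1 : ((k:ℝ) + 1) ≠ 0 := by positivity
    push_cast at hN hK
    have h5 : ((k:ℝ) + 1) * ∑ j ∈ Finset.range (k + 1 + 1), A j * A (k + 1 - j)
        = ((k:ℝ) + 1) * 1 := by linarith
    exact mul_left_cancel₀ hk1 h5


/-! ### The cube root of unity ω -/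

noncomputable def ω : ℂ := (-1 + (Real.sqrt 3 : ℂ) * Complex.I) / 2

lemma sq3c : ((Real.sqrt 3 : ℝ) : ℂ) ^ 2 = 3 := by
  have h : (Real.sqrt 3 : ℝ) ^ 2 = 3 := Real.sq_sqrt (by norm_num)
  calc ((Real.sqrt 3 : ℝ) : ℂ) ^ 2 = (((Real.sqrt 3 : ℝ) ^ 2 : ℝ) : ℂ) := by push_cast; ring
    _ = 3 := by rw [h]; norm_num

lemma omega_sum : 1 + ω + ω ^ 2 = 0 := by
  unfold ω
  linear_combination (((Real.sqrt 3 : ℝ) : ℂ) ^ 2 / 4) * Complex.I_sq - (1 / 4) * sq3c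

lemma omega_cube : ω ^ 3 = 1 := by
  linear_combination (ω - 1) * omega_sum

lemma conj_omega : (starRingEnd ℂ) ω = ω ^ 2 := by
  have h : (starRingEnd ℂ) ω = (-1 - (Real.sqrt 3 : ℂ) * Complex.I) / 2 := by
    unfold ω
    simp [map_div₀, map_add, map_neg, map_one, map_mul, Complex.conj_ofReal, Complex.conj_I, map_ofNat]
    ring
  rw [h]
  unfold ω
  linear_combination (-(((Real.sqrt 3 : ℝ) : ℂ) ^ 2) / 4) * Complex.I_sq + (1 / 4) * sq3c

lemma omega_mul_conj : ω * ω ^ 2 = 1 := by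
  linear_combination omega_cube

lemma norm_omega : ‖ω‖ = 1 := by
  have h1 : ω * (starRingEnd ℂ) ω = 1 := by rw [conj_omega]; exact omega_mul_conj
  rw [Complex.mul_conj] at h1
  have h2 : Complex.normSq ω = 1 := by exact_mod_cast h1
  have h3 : ‖ω‖ ^ 2 = 1 := by rw [← Complex.sq_norm] at h2; exact h2
  have h4 : ‖ω‖ = 1 := by nlinarith [norm_nonneg ω]
  rw [h4]

lemma neg_z_eq : -((1 - Complex.I * (Real.sqrt 3 : ℂ)) / 2) = ω := by
  unfold ω; ring

lemma w_eq : 2 * Complex.I / ((Real.sqrt 3 : ℂ) - Complex.I) = ω := by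
  have hne : ((Real.sqrt 3 : ℂ) - Complex.I) ≠ 0 := by
    intro h
    have := congrArg Complex.im h
    simp at this
  rw [div_eq_iff hne]
  unfold ω
  linear_combination (((Real.sqrt 3 : ℝ):ℂ) / 2) * Complex.I_sq - (Complex.I / 2) * sq3c

/-! ### cpoch facts -/

lemma cpoch_zero (s : ℂ) : cpoch s 0 = 1 := by simp [cpoch]

lemma cpoch_succ (s : ℂ) (k : ℕ) : cpoch s (k + 1) = cpoch s k * (s + k) := by
  simp [cpoch, Finset.prod_range_succ]

lemma cpoch_half_ne (n : ℕ) : cpoch (1 / 2 : ℂ) n ≠ 0 := by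
  unfold cpoch
  rw [Finset.prod_ne_zero_iff]
  intro i _ h
  have h2 : ((2 * i + 1 : ℕ) : ℂ) = 0 := by push_cast; linear_combination 2 * h
  have h3 : (2 * i + 1 : ℕ) = 0 := by exact_mod_cast h2
  omega

lemma cpoch_shift_ne (n l : ℕ) (hl : l ≤ n) : cpoch (1 / 2 - (n : ℂ)) l ≠ 0 := by
  unfold cpoch
  rw [Finset.prod_ne_zero_iff]
  intro i _ h
  have h2 : ((2 * i + 1 : ℕ) : ℂ) = ((2 * n : ℕ) : ℂ) := by push_cast; linear_combination 2 * h
  have h3 : (2 * i + 1 : ℕ) = 2 * n := by exact_mod_cast h2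
  omega

lemma key_poch (n : ℕ) : ∀ l, l ≤ n →
    cpoch (1 / 2 - (n : ℂ)) l * ((-1) ^ l * cpoch (1 / 2) (n - l)) = cpoch (1 / 2) n := by
  intro l
  induction l with
  | zero => intro _; simp [cpoch_zero]
  | succ l ih =>
    intro h
    have hl : l ≤ n := by omega
    have h1 : n - l = (n - (l + 1)) + 1 := by omega
    have hcast : ((n - (l + 1) : ℕ) : ℂ) = (n : ℂ) - l - 1 := by
      rw [Nat.cast_sub h]; push_cast; ring
    have E := ih hl
    rw [h1, cpoch_succ] at E
    rw [cpoch_succ]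
    linear_combination E - (-1 : ℂ) ^ l * cpoch (1 / 2 - (n : ℂ)) l
      * cpoch (1 / 2) (n - (l + 1)) * hcast

lemma A_cast (l : ℕ) : ((A l : ℝ) : ℂ) = cpoch (1 / 2) l / (l.factorial : ℂ) := by
  induction l with
  | zero => simp [A_zero, cpoch_zero]
  | succ l ih =>
    have hfac : ((l.factorial : ℕ) : ℂ) ≠ 0 := by exact_mod_cast l.factorial_ne_zero
    have h2 : ((2 * (l:ℝ) + 2) : ℝ) ≠ 0 := by positivity
    rw [A_succ]
    push_cast
    rw [ih, cpoch_succ, Nat.factorial_succ]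
    push_cast
    have h2c : ((2 * (l:ℂ) + 2) : ℂ) ≠ 0 := by
      intro h
      have : ((2 * l + 2 : ℕ) : ℂ) = 0 := by push_cast; linear_combination h
      have : (2 * l + 2 : ℕ) = 0 := by exact_mod_cast this
      omega
    have hl1 : ((l : ℂ) + 1) ≠ 0 := by
      intro h
      have : ((l + 1 : ℕ) : ℂ) = 0 := by push_cast; linear_combination h
      have : (l + 1 : ℕ) = 0 := by exact_mod_cast this
      omega
    field_simp
    ring

/-! ### The closed form of the term -/

noncomputable def Cc (n : ℕ) : ℂ :=
  ∑ l ∈ Finset.range (n + 1), ((A l * A (n - l) : ℝ) : ℂ) * ω ^ (n + l)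

lemma term_l (n l : ℕ) (h : l ≤ n) :
    (n.choose l : ℂ) * cpoch (1 / 2) l / cpoch (1 / 2 - (n : ℂ)) l *
        ((1 - Complex.I * (Real.sqrt 3 : ℂ)) / 2) ^ l * cpoch (1 / 2) n
        / ((n + 1).factorial : ℂ) * (2 * Complex.I / ((Real.sqrt 3 : ℂ) - Complex.I)) ^ n
    = ((n : ℂ) + 1)⁻¹ * (((A l * A (n - l) : ℝ)) : ℂ) * ω ^ (n + l) := by
  have hzpow : ((1 - Complex.I * (Real.sqrt 3 : ℂ)) / 2) ^ l = (-1) ^ l * ω ^ l := by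
    rw [show (1 - Complex.I * (Real.sqrt 3 : ℂ)) / 2 = -ω from by rw [← neg_z_eq]; ring]
    rw [neg_pow]
  have hwpow : (2 * Complex.I / ((Real.sqrt 3 : ℂ) - Complex.I)) ^ n = ω ^ n := by rw [w_eq]
  have hkey := key_poch n l h
  have hchoose : (n.choose l : ℂ) * (l.factorial : ℂ) * ((n - l).factorial : ℂ)
      = (n.factorial : ℂ) := by exact_mod_cast Nat.choose_mul_factorial_mul_factorial h
  have hfacl : ((l.factorial : ℕ) : ℂ) ≠ 0 := by exact_mod_cast l.factorial_ne_zero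
  have hfacnl : (((n - l).factorial : ℕ) : ℂ) ≠ 0 := by exact_mod_cast (n - l).factorial_ne_zero
  have hfacn : ((n.factorial : ℕ) : ℂ) ≠ 0 := by exact_mod_cast n.factorial_ne_zero
  have hfacn1 : (((n + 1).factorial : ℕ) : ℂ) ≠ 0 := by exact_mod_cast (n + 1).factorial_ne_zero
  have hfs : (((n + 1).factorial : ℕ) : ℂ) = ((n : ℂ) + 1) * (n.factorial : ℂ) := by
    rw [Nat.factorial_succ]; push_cast; ring
  have hn1 : ((n : ℂ) + 1) ≠ 0 := by
    intro hh
    have : ((n + 1 : ℕ) : ℂ) = 0 := by push_cast; linear_combination hh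
    have : (n + 1 : ℕ) = 0 := by exact_mod_cast this
    omega
  have hcp' : cpoch (1 / 2 - (n : ℂ)) l ≠ 0 := cpoch_shift_ne n l h
  have hsq : ((-1 : ℂ)) ^ l * (-1 : ℂ) ^ l = 1 := by
    rw [← pow_add, ← two_mul, pow_mul]
    norm_num
  rw [hzpow, hwpow, pow_add, ← hkey]
  push_cast
  rw [A_cast, A_cast, hfs]
  set Q := cpoch (1 / 2 - (n : ℂ)) l with hQ
  set P := cpoch (1 / 2 : ℂ) l with hP
  set R := cpoch (1 / 2 : ℂ) (n - l) with hR
  field_simp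
  linear_combination P * ω^l * ω^n * R * hchoose
    + (n.choose l : ℂ) * P * ω^l * R * ω^n * (l.factorial : ℂ) * ((n - l).factorial : ℂ) * hsq


/-! ### Abel summation bound `‖Cc n‖ ≤ 3 * A n` -/

lemma omega_pow_mod (j : ℕ) : ω ^ j = ω ^ (j % 3) := by
  conv_lhs => rw [← Nat.div_add_mod j 3]
  rw [pow_add, pow_mul, omega_cube, one_pow, one_mul]

noncomputable def Esum (m : ℕ) : ℂ := ∑ j ∈ Finset.range m, ω ^ j

lemma Esum_eq (m : ℕ) :
    Esum m = if m % 3 = 0 then 0 else if m % 3 = 1 then 1 else 1 + ω := by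
  induction m with
  | zero => simp [Esum]
  | succ m ih =>
    have hsucc : Esum (m + 1) = Esum m + ω ^ m := Finset.sum_range_succ _ m
    rw [hsucc, ih, omega_pow_mod m]
    have h3 : m % 3 = 0 ∨ m % 3 = 1 ∨ m % 3 = 2 := by omega
    rcases h3 with h | h | h
    · have : (m + 1) % 3 = 1 := by omega
      simp [h, this]
    · have : (m + 1) % 3 = 2 := by omega
      simp [h, this]
    · have : (m + 1) % 3 = 0 := by omega
      simp only [h, this]
      norm_num
      linear_combination omega_sum
  
lemma Esum_norm (m : ℕ) : ‖Esum m‖ ≤ 1 := by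
  rw [Esum_eq]
  have h1ω : ‖(1 : ℂ) + ω‖ = 1 := by
    have : (1 : ℂ) + ω = -ω ^ 2 := by linear_combination omega_sum
    rw [this, norm_neg, norm_pow, norm_omega, one_pow]
  split_ifs <;> simp [h1ω]

lemma d_compare (n i : ℕ) (h : i < n) :
    (A (i + 1) * A (n - (i + 1)) - A i * A (n - i))
      = (A i * A (n - 1 - i)) * ((2 * (i : ℝ) + 1) / (2 * (i : ℝ) + 2)
          - (2 * ((n - 1 - i : ℕ) : ℝ) + 1) / (2 * ((n - 1 - i : ℕ) : ℝ) + 2)) := by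
  have h1 : n - i = (n - 1 - i) + 1 := by omega
  have h2 : n - (i + 1) = n - 1 - i := by omega
  rw [h1, h2, A_succ, A_succ]
  ring

lemma frac_mono {a b : ℕ} (h : a ≤ b) :
    (2 * (a : ℝ) + 1) / (2 * a + 2) ≤ (2 * (b : ℝ) + 1) / (2 * b + 2) := by
  have hab : (a : ℝ) ≤ b := by exact_mod_cast h
  rw [div_le_div_iff₀ (by positivity) (by positivity)]
  nlinarith

lemma d_down {n i : ℕ} (h : i < n) (h2 : 2 * i + 1 ≤ n) :
    A (i + 1) * A (n - (i + 1)) ≤ A i * A (n - i) := by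
  have hc := d_compare n i h
  have hle : i ≤ n - 1 - i := by omega
  have hf := frac_mono hle
  have hP : (0:ℝ) < A i * A (n - 1 - i) := mul_pos (A_pos i) (A_pos (n - 1 - i))
  have hmul : A i * A (n - 1 - i) * ((2 * (i : ℝ) + 1) / (2 * (i : ℝ) + 2)
      - (2 * ((n - 1 - i : ℕ) : ℝ) + 1) / (2 * ((n - 1 - i : ℕ) : ℝ) + 2)) ≤ 0 :=
    mul_nonpos_of_nonneg_of_nonpos hP.le (by linarith)
  linarith

lemma d_up {n i : ℕ} (h : i < n) (h2 : n ≤ 2 * i + 1) :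
    A i * A (n - i) ≤ A (i + 1) * A (n - (i + 1)) := by
  have hc := d_compare n i h
  have hle : n - 1 - i ≤ i := by omega
  have hf := frac_mono hle
  have hP : (0:ℝ) < A i * A (n - 1 - i) := mul_pos (A_pos i) (A_pos (n - 1 - i))
  have hmul : 0 ≤ A i * A (n - 1 - i) * ((2 * (i : ℝ) + 1) / (2 * (i : ℝ) + 2)
      - (2 * ((n - 1 - i : ℕ) : ℝ) + 1) / (2 * ((n - 1 - i : ℕ) : ℝ) + 2)) :=
    mul_nonneg hP.le (by linarith)
  linarith

lemma var_bound (n : ℕ) :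
    ∑ i ∈ Finset.range n, |A (i + 1) * A (n - (i + 1)) - A i * A (n - i)| ≤ 2 * A n := by
  set d : ℕ → ℝ := fun i => A i * A (n - i) with hd
  set m := n / 2 with hm
  have hmn : m ≤ n := Nat.div_le_self n 2
  have hsplit : Finset.range n = Finset.Ico 0 n := by rw [Finset.range_eq_Ico]
  rw [hsplit, ← Finset.sum_Ico_consecutive _ (Nat.zero_le m) hmn]
  have hpart1 : ∑ i ∈ Finset.Ico 0 m, |d (i + 1) - d i| = ∑ i ∈ Finset.range m, (d i - d (i + 1)) := by
    rw [← Finset.range_eq_Ico]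
    apply Finset.sum_congr rfl
    intro i hi
    have hi' := Finset.mem_range.mp hi
    have hdd := d_down (n := n) (i := i) (by omega) (by omega)
    have h' : d (i + 1) ≤ d i := by simp only [hd]; exact hdd
    rw [abs_of_nonpos (by linarith)]
    ring
  have hpart2 : ∑ i ∈ Finset.Ico m n, |d (i + 1) - d i| = ∑ i ∈ Finset.Ico m n, (d (i + 1) - d i) := by
    apply Finset.sum_congr rfl
    intro i hi
    obtain ⟨hi1, hi2⟩ := Finset.mem_Ico.mp hi
    have hdu := d_up (n := n) (i := i) (by omega) (by omega)
    have h' : d i ≤ d (i + 1) := by simp only [hd]; exact hdu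
    rw [_root_.abs_of_nonneg (by linarith)]
  rw [hpart1, hpart2]
  have ht1 : ∑ i ∈ Finset.range m, (d i - d (i + 1)) = d 0 - d m := Finset.sum_range_sub' d m
  have ht2 : ∑ i ∈ Finset.Ico m n, (d (i + 1) - d i) = d n - d m := by
    rw [Finset.sum_Ico_eq_sub _ hmn, Finset.sum_range_sub d n, Finset.sum_range_sub d m]
    ring
  rw [ht1, ht2]
  have hd0 : d 0 = A n := by simp [hd, A_zero]
  have hdn : d n = A n := by simp [hd, A_zero]
  have hdm : 0 ≤ d m := by
    simp only [hd]
    exact mul_nonneg (A_pos m).le (A_pos _).le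
  rw [hd0, hdn]
  linarith

lemma Cc_eq (n : ℕ) :
    Cc n = ω ^ n * ∑ l ∈ Finset.range (n + 1), (A l * A (n - l)) • ω ^ l := by
  unfold Cc
  rw [Finset.mul_sum]
  apply Finset.sum_congr rfl
  intro l _
  rw [pow_add, Complex.real_smul]
  push_cast
  ring

lemma Cc_norm (n : ℕ) : ‖Cc n‖ ≤ 3 * A n := by
  rw [Cc_eq, norm_mul, norm_pow, norm_omega, one_pow, one_mul]
  rw [Finset.sum_range_by_parts (fun l => A l * A (n - l)) (fun l => ω ^ l) (n + 1)]
  simp only [Nat.add_sub_cancel]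
  have hEs : ∀ m : ℕ, ∑ j ∈ Finset.range m, ω ^ j = Esum m := fun _ => rfl
  rw [hEs]
  calc ‖(A n * A (n - n)) • Esum (n + 1) - ∑ i ∈ Finset.range n,
          (A (i + 1) * A (n - (i + 1)) - A i * A (n - i)) • (∑ j ∈ Finset.range (i + 1), ω ^ j)‖
      ≤ ‖(A n * A (n - n)) • Esum (n + 1)‖ + ‖∑ i ∈ Finset.range n,
          (A (i + 1) * A (n - (i + 1)) - A i * A (n - i)) • Esum (i + 1)‖ := by
        simp only [hEs]; exact norm_sub_le _ _
    _ ≤ A n + 2 * A n := by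
        apply add_le_add
        · rw [norm_smul]
          have h1 : ‖A n * A (n - n)‖ = A n := by
            simp [A_zero, abs_of_pos (A_pos n)]
          rw [h1]
          calc A n * ‖Esum (n + 1)‖ ≤ A n * 1 := by
                exact mul_le_mul_of_nonneg_left (Esum_norm _) (A_pos n).le
            _ = A n := mul_one _
        · calc ‖∑ i ∈ Finset.range n, (A (i + 1) * A (n - (i + 1)) - A i * A (n - i)) • Esum (i + 1)‖
              ≤ ∑ i ∈ Finset.range n, ‖(A (i + 1) * A (n - (i + 1)) - A i * A (n - i)) • Esum (i + 1)‖ :=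
                norm_sum_le _ _
            _ ≤ ∑ i ∈ Finset.range n, |A (i + 1) * A (n - (i + 1)) - A i * A (n - i)| := by
                apply Finset.sum_le_sum
                intro i _
                rw [norm_smul]
                calc ‖A (i + 1) * A (n - (i + 1)) - A i * A (n - i)‖ * ‖Esum (i + 1)‖
                    ≤ ‖A (i + 1) * A (n - (i + 1)) - A i * A (n - i)‖ * 1 :=
                      mul_le_mul_of_nonneg_left (Esum_norm _) (norm_nonneg _)
                  _ = |A (i + 1) * A (n - (i + 1)) - A i * A (n - i)| := by
                      rw [mul_one, Real.norm_eq_abs]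
            _ ≤ 2 * A n := var_bound n
    _ = 3 * A n := by ring


/-! ### Summability -/

lemma term_eq (n : ℕ) : stmt4Term n = ((n : ℂ) + 1)⁻¹ * Cc n := by
  unfold stmt4Term Cc
  rw [Finset.sum_mul, Finset.sum_div, Finset.sum_mul, Finset.mul_sum]
  apply Finset.sum_congr rfl
  intro l hl
  have h := Finset.mem_range.mp hl
  linear_combination term_l n l (by omega)

lemma norm_stmt (n : ℕ) : ‖stmt4Term n‖ = (((n:ℝ)) + 1)⁻¹ * ‖Cc n‖ := by
  rw [term_eq, norm_mul, norm_inv]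
  congr 2
  rw [show ((n:ℂ) + 1) = ((n + 1 : ℕ) : ℂ) by push_cast; ring, Complex.norm_natCast]
  push_cast
  ring

lemma bound32 (n : ℕ) : (((n:ℝ)) + 1)⁻¹ * ‖Cc n‖ ≤ 3 * ((((n:ℝ) + 1)) ^ ((3:ℝ)/2))⁻¹ := by
  have h0 : (0:ℝ) < (n:ℝ) + 1 := by positivity
  have hs0 : (0:ℝ) < Real.sqrt ((n:ℝ) + 1) := Real.sqrt_pos.mpr h0
  have hpow : (((n:ℝ)) + 1) ^ ((3:ℝ)/2) = ((n:ℝ) + 1) * Real.sqrt ((n:ℝ) + 1) := by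
    rw [show (3:ℝ)/2 = 1 + 1/2 by norm_num, Real.rpow_add h0, Real.rpow_one,
      ← Real.sqrt_eq_rpow]
  have h2 : ‖Cc n‖ ≤ 3 * (Real.sqrt ((n:ℝ) + 1))⁻¹ := by
    have ha := A_le_inv_sqrt n
    have hb := Cc_norm n
    linarith
  rw [hpow, mul_inv]
  calc (((n:ℝ)) + 1)⁻¹ * ‖Cc n‖ ≤ (((n:ℝ)) + 1)⁻¹ * (3 * (Real.sqrt ((n:ℝ) + 1))⁻¹) :=
        mul_le_mul_of_nonneg_left h2 (by positivity)
    _ = 3 * ((((n:ℝ)) + 1)⁻¹ * (Real.sqrt ((n:ℝ) + 1))⁻¹) := by ring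

lemma summable_bound : Summable (fun n : ℕ => 3 * ((((n:ℝ) + 1)) ^ ((3:ℝ)/2))⁻¹) := by
  apply Summable.mul_left
  have h : Summable (fun n : ℕ => (((n:ℝ)) ^ ((3:ℝ)/2))⁻¹) :=
    Real.summable_nat_rpow_inv.mpr (by norm_num)
  have h2 := (summable_nat_add_iff 1).mpr h
  apply h2.congr
  intro n
  push_cast
  ring_nf

lemma summable_term : Summable stmt4Term := by
  apply Summable.of_norm_bounded summable_bound
  intro n
  rw [norm_stmt]
  exact bound32 n

/-! ### The sum of the power series on [0,1) -/

lemma conj_omega_sq : (starRingEnd ℂ) (ω ^ 2) = ω := by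
  rw [map_pow, conj_omega, ← pow_mul]
  rw [show 2 * 2 = 3 + 1 by norm_num, pow_succ, omega_cube, one_mul]

lemma tsum_Cc (u : ℝ) (h0 : 0 ≤ u) (h1 : u < 1) :
    ∑' n : ℕ, Cc n * (u:ℂ) ^ n = (((Real.sqrt (u^2 + u + 1))⁻¹ : ℝ) : ℂ) := by
  have hnx : ‖ω ^ 2 * (u:ℂ)‖ = u := by
    rw [norm_mul, norm_pow, norm_omega, one_pow, one_mul, Complex.norm_real,
      Real.norm_eq_abs, _root_.abs_of_nonneg h0]
  have hny : ‖ω * (u:ℂ)‖ = u := by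
    rw [norm_mul, norm_omega, one_mul, Complex.norm_real, Real.norm_eq_abs, _root_.abs_of_nonneg h0]
  set F1 : ℕ → ℂ := fun l => ((A l : ℝ) : ℂ) * (ω ^ 2 * (u:ℂ)) ^ l with hF1
  set F2 : ℕ → ℂ := fun l => ((A l : ℝ) : ℂ) * (ω * (u:ℂ)) ^ l with hF2
  have hgeo : Summable (fun l : ℕ => u ^ l) := summable_geometric_of_lt_one h0 h1
  have hsn : ∀ (v : ℂ), ‖v‖ = u → Summable (fun l : ℕ => ‖((A l : ℝ) : ℂ) * v ^ l‖) := by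
    intro v hv
    apply Summable.of_nonneg_of_le (fun l => norm_nonneg _) _ hgeo
    intro l
    rw [norm_mul, norm_pow, hv, Complex.norm_real, Real.norm_eq_abs, _root_.abs_of_pos (A_pos l)]
    calc A l * u ^ l ≤ 1 * u ^ l :=
          mul_le_mul_of_nonneg_right (A_le_one l) (pow_nonneg h0 l)
      _ = u ^ l := one_mul _
  have hs1 : Summable (fun l => ‖F1 l‖) := hsn _ hnx
  have hs2 : Summable (fun l => ‖F2 l‖) := hsn _ hny
  -- the Cauchy product identity for the squares
  have hsq : ∀ (v : ℂ), ‖v‖ = u →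
      (∑' n : ℕ, ((A n : ℝ) : ℂ) * v ^ n) * (∑' n : ℕ, ((A n : ℝ) : ℂ) * v ^ n) = (1 - v)⁻¹ := by
    intro v hv
    rw [tsum_mul_tsum_eq_tsum_sum_range_of_summable_norm (hsn v hv) (hsn v hv)]
    have hterm : ∀ n : ℕ, (∑ k ∈ Finset.range (n + 1),
        (((A k : ℝ) : ℂ) * v ^ k) * (((A (n - k) : ℝ) : ℂ) * v ^ (n - k))) = v ^ n := by
      intro n
      have hc : ∀ k ∈ Finset.range (n + 1),
          (((A k : ℝ) : ℂ) * v ^ k) * (((A (n - k) : ℝ) : ℂ) * v ^ (n - k))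
            = ((A k * A (n - k) : ℝ) : ℂ) * v ^ n := by
        intro k hk
        have hk' := Finset.mem_range.mp hk
        have he : v ^ k * v ^ (n - k) = v ^ n := by
          rw [← pow_add]
          congr 1
          omega
        push_cast
        calc ((A k : ℝ) : ℂ) * v ^ k * (((A (n - k) : ℝ) : ℂ) * v ^ (n - k))
            = ((A k : ℝ) : ℂ) * ((A (n - k) : ℝ) : ℂ) * (v ^ k * v ^ (n - k)) := by ring
          _ = ((A k : ℝ) : ℂ) * ((A (n - k) : ℝ) : ℂ) * v ^ n := by rw [he]
      rw [Finset.sum_congr rfl hc, ← Finset.sum_mul]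
      have : (∑ k ∈ Finset.range (n + 1), ((A k * A (n - k) : ℝ) : ℂ))
          = ((∑ k ∈ Finset.range (n + 1), A k * A (n - k) : ℝ) : ℂ) := by
        push_cast
        ring
      rw [this, V n]
      norm_num
    rw [tsum_congr hterm]
    exact tsum_geometric_of_norm_lt_one (by rw [hv]; exact h1)
  -- the main Cauchy product
  have hcp := tsum_mul_tsum_eq_tsum_sum_range_of_summable_norm hs1 hs2
  have hterm : ∀ n : ℕ, (∑ k ∈ Finset.range (n + 1), F1 k * F2 (n - k)) = Cc n * (u:ℂ) ^ n := by
    intro n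
    unfold Cc
    rw [Finset.sum_mul]
    apply Finset.sum_congr rfl
    intro k hk
    have hk' := Finset.mem_range.mp hk
    simp only [hF1, hF2]
    have e1 : ω ^ (2 * k) * ω ^ (n - k) = ω ^ (n + k) := by
      rw [← pow_add]
      congr 1
      omega
    have e2 : (u:ℂ) ^ k * (u:ℂ) ^ (n - k) = (u:ℂ) ^ n := by
      rw [← pow_add]
      congr 1
      omega
    calc ((A k : ℝ) : ℂ) * (ω ^ 2 * (u:ℂ)) ^ k * (((A (n - k) : ℝ) : ℂ) * (ω * (u:ℂ)) ^ (n - k))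
        = ((A k : ℝ) : ℂ) * ((A (n - k) : ℝ) : ℂ)
            * ((ω ^ (2 * k) * ω ^ (n - k)) * ((u:ℂ) ^ k * (u:ℂ) ^ (n - k))) := by
          rw [mul_pow, mul_pow, ← pow_mul]
          ring
      _ = ((A k : ℝ) : ℂ) * ((A (n - k) : ℝ) : ℂ) * (ω ^ (n + k) * (u:ℂ) ^ n) := by rw [e1, e2]
      _ = ((A k * A (n - k) : ℝ) : ℂ) * ω ^ (n + k) * (u:ℂ) ^ n := by push_cast; ring
  have hG : ∑' n : ℕ, Cc n * (u:ℂ) ^ n = (∑' n, F1 n) * (∑' n, F2 n) := by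
    rw [hcp]
    exact (tsum_congr hterm).symm
  -- conjugation
  have hconj : (∑' n, F2 n) = (starRingEnd ℂ) (∑' n, F1 n) := by
    rw [starRingEnd_apply, tsum_star]
    apply tsum_congr
    intro l
    simp only [hF1, hF2]
    rw [← starRingEnd_apply, map_mul, Complex.conj_ofReal, map_pow, map_mul, conj_omega_sq,
      Complex.conj_ofReal]
  -- the square of G
  have hXX := hsq _ hnx
  have hYY := hsq _ hny
  have hprod : (1 - ω ^ 2 * (u:ℂ)) * (1 - ω * (u:ℂ)) = (((u^2 + u + 1 : ℝ)) : ℂ) := by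
    push_cast
    linear_combination (-(u:ℂ)) * omega_sum + (u:ℂ)^2 * omega_cube
  have hne : (((u^2 + u + 1 : ℝ)) : ℂ) ≠ 0 := by
    have : (0:ℝ) < u^2 + u + 1 := by nlinarith [sq_nonneg (2*u + 1)]
    exact_mod_cast Complex.ofReal_ne_zero.mpr this.ne'
  have hG2 : (∑' n : ℕ, Cc n * (u:ℂ) ^ n) ^ 2 = ((((u^2 + u + 1 : ℝ)) : ℂ))⁻¹ := by
    rw [hG]
    calc ((∑' n, F1 n) * (∑' n, F2 n)) ^ 2
        = ((∑' n, F1 n) * (∑' n, F1 n)) * ((∑' n, F2 n) * (∑' n, F2 n)) := by ring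
      _ = (1 - ω ^ 2 * (u:ℂ))⁻¹ * (1 - ω * (u:ℂ))⁻¹ := by rw [hXX, hYY]
      _ = ((1 - ω ^ 2 * (u:ℂ)) * (1 - ω * (u:ℂ)))⁻¹ := (mul_inv _ _).symm
      _ = ((((u^2 + u + 1 : ℝ)) : ℂ))⁻¹ := by rw [hprod]
  -- G is a nonnegative real
  have hGr : ∑' n : ℕ, Cc n * (u:ℂ) ^ n = ((Complex.normSq (∑' n, F1 n) : ℝ) : ℂ) := by
    rw [hG, hconj, Complex.mul_conj]
  set r : ℝ := Complex.normSq (∑' n, F1 n) with hr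
  have hrnn : 0 ≤ r := Complex.normSq_nonneg _
  have hr2 : r ^ 2 = (u^2 + u + 1)⁻¹ := by
    have := hG2
    rw [hGr] at this
    have h2 : (((r ^ 2 : ℝ)) : ℂ) = ((((u^2 + u + 1)⁻¹ : ℝ)) : ℂ) := by
      push_cast
      rw [this]
      push_cast
      ring
    exact_mod_cast h2
  rw [hGr]
  congr 1
  have hvpos : (0:ℝ) < u^2 + u + 1 := by nlinarith [sq_nonneg (2*u + 1)]
  calc r = Real.sqrt (r ^ 2) := (Real.sqrt_sq hrnn).symm
    _ = Real.sqrt ((u^2 + u + 1)⁻¹) := by rw [hr2]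
    _ = (Real.sqrt (u^2 + u + 1))⁻¹ := Real.sqrt_inv _

/-! ### The integral -/

lemma int_pow (n : ℕ) : ∫ u in Set.Ioo (0:ℝ) 1, u ^ n = (((n:ℝ)) + 1)⁻¹ := by
  rw [← MeasureTheory.integral_Ioc_eq_integral_Ioo,
    ← intervalIntegral.integral_of_le zero_le_one, integral_pow]
  norm_num

lemma hasDeriv_arsinh_comp (u : ℝ) :
    HasDerivAt (fun x : ℝ => Real.arsinh ((2 * x + 1) / Real.sqrt 3))
      ((Real.sqrt (u ^ 2 + u + 1))⁻¹) u := by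
  have hs3 : (0:ℝ) < Real.sqrt 3 := Real.sqrt_pos.mpr (by norm_num)
  have hinner : HasDerivAt (fun x : ℝ => (2 * x + 1) / Real.sqrt 3) (2 / Real.sqrt 3) u := by
    have hid : HasDerivAt (fun x : ℝ => 2 * x + 1) 2 u := by
      simpa using ((hasDerivAt_id u).const_mul (2:ℝ)).add_const (1:ℝ)
    exact hid.div_const _
  have houter := (Real.hasDerivAt_arsinh ((2 * u + 1) / Real.sqrt 3)).comp u hinner
  refine HasDerivAt.congr_deriv houter ?_
  symm
  have hvpos : (0:ℝ) < u^2 + u + 1 := by nlinarith [sq_nonneg (2*u + 1)]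
  have hv : (0:ℝ) < Real.sqrt (u^2 + u + 1) := Real.sqrt_pos.mpr hvpos
  have h3 : 1 + ((2*u+1)/Real.sqrt 3)^2 = (2 / Real.sqrt 3)^2 * (u^2 + u + 1) := by
    rw [div_pow, div_pow, Real.sq_sqrt (by norm_num : (0:ℝ) ≤ 3)]
    field_simp
    ring
  rw [h3, Real.sqrt_mul (sq_nonneg _), Real.sqrt_sq (by positivity : (0:ℝ) ≤ 2 / Real.sqrt 3)]
  have h23 : (2 / Real.sqrt 3) ≠ 0 := by positivity
  rw [mul_inv]
  rw [mul_comm ((2 / Real.sqrt 3)⁻¹) ((Real.sqrt (u^2 + u + 1))⁻¹), mul_assoc,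
    inv_mul_cancel₀ h23, mul_one]

lemma cont_sqrt_inv : Continuous (fun u : ℝ => (Real.sqrt (u^2 + u + 1))⁻¹) := by
  apply Continuous.inv₀
  · exact Real.continuous_sqrt.comp (by continuity)
  · intro u
    exact (Real.sqrt_pos.mpr (by nlinarith [sq_nonneg (2*u + 1)])).ne'

lemma real_integral :
    ∫ u in Set.Ioo (0:ℝ) 1, (Real.sqrt (u^2 + u + 1))⁻¹ = Real.log (1 + 2 / Real.sqrt 3) := by
  have hs3 : (0:ℝ) < Real.sqrt 3 := Real.sqrt_pos.mpr (by norm_num)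
  rw [← MeasureTheory.integral_Ioc_eq_integral_Ioo,
    ← intervalIntegral.integral_of_le zero_le_one]
  rw [intervalIntegral.integral_eq_sub_of_hasDerivAt (fun x _ => hasDeriv_arsinh_comp x)
    (cont_sqrt_inv.intervalIntegrable 0 1)]
  have h31 : (2 * (1:ℝ) + 1) / Real.sqrt 3 = Real.sqrt 3 := by
    rw [show (2 * (1:ℝ) + 1) = Real.sqrt 3 * Real.sqrt 3 by
      rw [Real.mul_self_sqrt (by norm_num : (0:ℝ) ≤ 3)]; norm_num]
    rw [mul_div_assoc, div_self hs3.ne', mul_one]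
  have h30 : (2 * (0:ℝ) + 1) / Real.sqrt 3 = (Real.sqrt 3)⁻¹ := by
    norm_num
  rw [h31, h30]
  have e1 : Real.arsinh (Real.sqrt 3) = Real.log (Real.sqrt 3 + 2) := by
    simp only [Real.arsinh]
    congr 1
    rw [Real.sq_sqrt (by norm_num : (0:ℝ) ≤ 3)]
    rw [show (1:ℝ) + 3 = 2^2 by norm_num, Real.sqrt_sq (by norm_num : (0:ℝ) ≤ 2)]
  have e0 : Real.arsinh ((Real.sqrt 3)⁻¹) = Real.log (Real.sqrt 3) := by
    simp only [Real.arsinh]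
    have ha : 1 + ((Real.sqrt 3)⁻¹)^2 = 4/3 := by
      rw [inv_pow, Real.sq_sqrt (by norm_num : (0:ℝ) ≤ 3)]
      norm_num
    rw [ha]
    have hb : Real.sqrt (4/3) = 2 / Real.sqrt 3 := by
      rw [show (4:ℝ)/3 = (2 / Real.sqrt 3)^2 by
        rw [div_pow, Real.sq_sqrt (by norm_num : (0:ℝ) ≤ 3)]; norm_num]
      exact Real.sqrt_sq (by positivity)
    rw [hb]
    congr 1
    have h33 : (3:ℝ) = Real.sqrt 3 * Real.sqrt 3 := (Real.mul_self_sqrt (by norm_num)).symm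
    field_simp
    linarith [h33]
  rw [e1, e0, ← Real.log_div (by positivity) hs3.ne']
  congr 1
  rw [add_div, div_self hs3.ne']

end Stmt4Aux

theorem stmt4 :
    Summable stmt4Term ∧
      ((Real.log (1 + 2 / Real.sqrt 3) : ℂ) = ∑' n : ℕ, stmt4Term n) := by
  constructor
  · exact Stmt4Aux.summable_term
  · have hint : ∀ n : ℕ, MeasureTheory.IntegrableOn
        (fun u : ℝ => Stmt4Aux.Cc n * (u:ℂ) ^ n) (Set.Ioo 0 1) := by
      intro n
      have hc : Continuous (fun u : ℝ => Stmt4Aux.Cc n * (u:ℂ) ^ n) :=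
        continuous_const.mul (Complex.continuous_ofReal.pow n)
      exact hc.integrableOn_Icc.mono_set Set.Ioo_subset_Icc_self
    have hnorm : ∀ n : ℕ, (∫ u in Set.Ioo (0:ℝ) 1, ‖Stmt4Aux.Cc n * (u:ℂ) ^ n‖)
        = ‖Stmt4Aux.Cc n‖ * (((n:ℝ)) + 1)⁻¹ := by
      intro n
      have heq : Set.EqOn (fun u : ℝ => ‖Stmt4Aux.Cc n * (u:ℂ) ^ n‖)
          (fun u : ℝ => ‖Stmt4Aux.Cc n‖ * u ^ n) (Set.Ioo 0 1) := by
        intro u hu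
        simp only
        rw [norm_mul, norm_pow, Complex.norm_real, Real.norm_eq_abs, _root_.abs_of_pos hu.1]
      rw [MeasureTheory.setIntegral_congr_fun measurableSet_Ioo heq,
        MeasureTheory.integral_const_mul, Stmt4Aux.int_pow]
    have hsumint : Summable (fun n : ℕ => ∫ u in Set.Ioo (0:ℝ) 1, ‖Stmt4Aux.Cc n * (u:ℂ) ^ n‖) := by
      apply Summable.of_nonneg_of_le _ _ Stmt4Aux.summable_bound
      · intro n
        exact MeasureTheory.integral_nonneg (fun u => norm_nonneg _)
      · intro n
        rw [hnorm n, mul_comm]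
        exact Stmt4Aux.bound32 n
    have hex := MeasureTheory.integral_tsum_of_summable_integral_norm hint hsumint
    have hL : ∀ n : ℕ, (∫ u in Set.Ioo (0:ℝ) 1, Stmt4Aux.Cc n * (u:ℂ) ^ n) = stmt4Term n := by
      intro n
      rw [MeasureTheory.integral_const_mul]
      have hcast : (fun u : ℝ => ((u:ℂ)) ^ n) = (fun u : ℝ => (((u ^ n : ℝ)) : ℂ)) := by
        funext u
        push_cast
        ring
      have hip : (∫ u in Set.Ioo (0:ℝ) 1, (((u ^ n : ℝ)) : ℂ))
          = ((((∫ u in Set.Ioo (0:ℝ) 1, u ^ n) : ℝ)) : ℂ) := integral_ofReal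
      rw [hcast, hip, Stmt4Aux.int_pow n, Stmt4Aux.term_eq n]
      push_cast
      ring
    have hR : (∫ u in Set.Ioo (0:ℝ) 1, ∑' n : ℕ, Stmt4Aux.Cc n * (u:ℂ) ^ n)
        = ((Real.log (1 + 2 / Real.sqrt 3) : ℝ) : ℂ) := by
      have heq : Set.EqOn (fun u : ℝ => ∑' n : ℕ, Stmt4Aux.Cc n * (u:ℂ) ^ n)
          (fun u : ℝ => (((Real.sqrt (u^2 + u + 1))⁻¹ : ℝ) : ℂ)) (Set.Ioo 0 1) := by
        intro u hu
        exact Stmt4Aux.tsum_Cc u hu.1.le hu.2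
      have h2 : (∫ u in Set.Ioo (0:ℝ) 1, (((Real.sqrt (u^2 + u + 1))⁻¹ : ℝ) : ℂ))
          = ((((∫ u in Set.Ioo (0:ℝ) 1, (Real.sqrt (u^2 + u + 1))⁻¹) : ℝ)) : ℂ) := integral_ofReal
      rw [MeasureTheory.setIntegral_congr_fun measurableSet_Ioo heq, h2, Stmt4Aux.real_integral]
    calc ((Real.log (1 + 2 / Real.sqrt 3) : ℝ) : ℂ)
        = ∫ u in Set.Ioo (0:ℝ) 1, ∑' n : ℕ, Stmt4Aux.Cc n * (u:ℂ) ^ n := hR.symm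
      _ = ∑' n : ℕ, ∫ u in Set.Ioo (0:ℝ) 1, Stmt4Aux.Cc n * (u:ℂ) ^ n := hex.symm
      _ = ∑' n : ℕ, stmt4Term n := tsum_congr hL
end

section
/- Let 0 < α < 1 and r > 0, and suppose β_r ∈ (0,1) satisfies B_α(1−β_r)/B_α(β_r) = √r, where B_α(x) = √(∫₀^x (t−t²)^(α−1) dt). Then B_α(β_r)² = Γ(α)²/(Γ(2α)(r+1)), i.e. ∫₀^{β_r} (t−t²)^(α−1) dt = Γ(α)²/((r+1)Γ(2α)). -/
open Real MeasureTheory intervalIntegral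

/-- `B_α(x) = √(∫₀ˣ (t - t²)^(α-1) dt)`. -/
noncomputable def Balpha (α x : ℝ) : ℝ :=
  Real.sqrt (∫ t in (0:ℝ)..x, (t - t ^ 2) ^ (α - 1))

lemma stmt7_eqOn (α : ℝ) : ∀ t ∈ Set.Icc (0:ℝ) 1,
    (t - t ^ 2) ^ (α - 1) = t ^ (α - 1) * (1 - t) ^ (α - 1) := by
  intro t ht
  rw [show t - t ^ 2 = t * (1 - t) by ring, Real.mul_rpow ht.1 (by linarith [ht.2])]

lemma stmt7_intg (α : ℝ) (hα : 0 < α) :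
    IntervalIntegrable (fun t : ℝ => (t - t ^ 2) ^ (α - 1)) volume 0 1 := by
  have hc := Complex.betaIntegral_convergent (u := (α : ℂ)) (v := (α : ℂ))
    (by simpa using hα) (by simpa using hα)
  have hre : IntervalIntegrable
      (fun x : ℝ => ((x : ℂ) ^ ((α : ℂ) - 1) * ((1 : ℂ) - x) ^ ((α : ℂ) - 1)).re)
      volume 0 1 := by
    rw [intervalIntegrable_iff] at hc ⊢
    exact hc.re
  apply hre.congr
  intro x hx
  rw [Set.uIoc_of_le (by norm_num : (0:ℝ) ≤ 1)] at hx
  have h0 : (0:ℝ) ≤ x := hx.1.le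
  have h1 : (0:ℝ) ≤ 1 - x := by linarith [hx.2]
  have heq : ((x : ℂ) ^ ((α : ℂ) - 1) * ((1 : ℂ) - x) ^ ((α : ℂ) - 1))
      = ((x ^ (α - 1) * (1 - x) ^ (α - 1) : ℝ) : ℂ) := by
    rw [Complex.ofReal_mul, Complex.ofReal_cpow h0, Complex.ofReal_cpow h1]
    push_cast
    ring
  show ((x : ℂ) ^ ((α : ℂ) - 1) * ((1 : ℂ) - x) ^ ((α : ℂ) - 1)).re = (x - x ^ 2) ^ (α - 1)
  rw [heq, Complex.ofReal_re, stmt7_eqOn α x ⟨h0, by linarith [hx.2]⟩]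

lemma stmt7_value (α : ℝ) (hα : 0 < α) :
    Real.Gamma α ^ 2 = Real.Gamma (2 * α) *
      ∫ t in (0:ℝ)..1, (t - t ^ 2) ^ (α - 1) := by
  have hc := Complex.Gamma_mul_Gamma_eq_betaIntegral (s := (α : ℂ)) (t := (α : ℂ))
    (by simpa using hα) (by simpa using hα)
  have hbeta : Complex.betaIntegral (α : ℂ) (α : ℂ)
      = ((∫ t in (0:ℝ)..1, (t - t ^ 2) ^ (α - 1) : ℝ) : ℂ) := by
    rw [Complex.betaIntegral, ← intervalIntegral.integral_ofReal]
    apply intervalIntegral.integral_congr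
    intro x hx
    rw [Set.uIcc_of_le (by norm_num : (0:ℝ) ≤ 1)] at hx
    have h0 : (0:ℝ) ≤ x := hx.1
    have h1 : (0:ℝ) ≤ 1 - x := by linarith [hx.2]
    show (x : ℂ) ^ ((α : ℂ) - 1) * ((1 : ℂ) - x) ^ ((α : ℂ) - 1)
      = (((x - x ^ 2) ^ (α - 1) : ℝ) : ℂ)
    rw [stmt7_eqOn α x ⟨h0, hx.2⟩, Complex.ofReal_mul, Complex.ofReal_cpow h0,
      Complex.ofReal_cpow h1]
    push_cast
    ring
  rw [hbeta] at hc
  have h2 : (α : ℂ) + α = ((2 * α : ℝ) : ℂ) := by push_cast; ring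
  rw [h2, Complex.Gamma_ofReal, Complex.Gamma_ofReal] at hc
  have := hc
  rw [← Complex.ofReal_mul, ← Complex.ofReal_mul] at this
  have hre := Complex.ofReal_injective this
  nlinarith [hre]

theorem stmt7 (α r β : ℝ) (hα : 0 < α) (hα1 : α < 1) (hr : 0 < r)
    (hβ : β ∈ Set.Ioo (0:ℝ) 1)
    (h : Balpha α (1 - β) / Balpha α β = Real.sqrt r) :
    (∫ t in (0:ℝ)..β, (t - t ^ 2) ^ (α - 1)) =
      Real.Gamma α ^ 2 / ((r + 1) * Real.Gamma (2 * α)) := by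
  obtain ⟨hβ0, hβ1⟩ := hβ
  set f : ℝ → ℝ := fun t => (t - t ^ 2) ^ (α - 1) with hf
  have hint : IntervalIntegrable f volume 0 1 := stmt7_intg α hα
  have hint1 : IntervalIntegrable f volume 0 β := by
    apply hint.mono_set
    rw [Set.uIcc_of_le hβ0.le, Set.uIcc_of_le (by norm_num : (0:ℝ) ≤ 1)]
    exact Set.Icc_subset_Icc le_rfl hβ1.le
  have hint2 : IntervalIntegrable f volume β 1 := by
    apply hint.mono_set
    rw [Set.uIcc_of_le hβ1.le, Set.uIcc_of_le (by norm_num : (0:ℝ) ≤ 1)]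
    exact Set.Icc_subset_Icc hβ0.le le_rfl
  -- symmetry
  have hsym : (∫ t in (0:ℝ)..(1 - β), f t) = ∫ t in β..1, f t := by
    have := intervalIntegral.integral_comp_sub_left (a := 0) (b := 1 - β) f 1
    simp only [sub_zero, sub_sub_cancel] at this
    rw [← this]
    apply intervalIntegral.integral_congr
    intro x _
    show f x = f (1 - x)
    simp only [hf]
    ring_nf
  -- positivity of B := ∫₀^β f
  set B := ∫ t in (0:ℝ)..β, f t with hB
  set A := ∫ t in (0:ℝ)..(1 - β), f t with hA
  have hBpos : 0 < B := by
    apply intervalIntegral.intervalIntegral_pos_of_pos_on hint1 _ hβ0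
    intro x hx
    apply Real.rpow_pos_of_pos
    nlinarith [hx.1, hx.2]
  have hAnonneg : 0 ≤ A := by
    apply intervalIntegral.integral_nonneg (by linarith)
    intro u hu
    apply Real.rpow_nonneg
    nlinarith [hu.1, hu.2]
  -- from h : sqrt A / sqrt B = sqrt r
  have hArB : A = r * B := by
    have hsq : Real.sqrt A = Real.sqrt (r * B) := by
      have h' : Real.sqrt A = Real.sqrt r * Real.sqrt B := by
        rw [Balpha, Balpha,
          div_eq_iff (Real.sqrt_pos.mpr hBpos).ne'] at h
        exact h
      rw [h', Real.sqrt_mul hr.le]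
    exact (Real.sqrt_inj hAnonneg (by positivity)).mp hsq
  have hadd : B + (∫ t in β..1, f t) = ∫ t in (0:ℝ)..1, f t :=
    intervalIntegral.integral_add_adjacent_intervals hint1 hint2
  have hval := stmt7_value α hα
  have hGpos : 0 < Real.Gamma (2 * α) := Real.Gamma_pos_of_pos (by linarith)
  rw [← hadd, ← hsym, hArB] at hval
  rw [hB] at *
  field_simp
  linarith [hval]
end
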